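/- arXiv:1611.08120 — 3 statements merged into one kernel-verified Lean document; each statement's English description precedes it below -/
import Mathlib

section
/- Let p be an odd prime with Pisano period l_p = 2p+2 and β(p) = 2, and let C = ⟨f(x)⟩ be the cyclic code of length 2p+2 over F_p generated by the Fibonacci polynomial f(x). Then C is a one-weight code: every one of its p² − 1 nonzero codewords has Hamming weight exactly 2p. -/
open Polynomial

/-- The Fibonacci sequence over `ZMod p`: `F 0 = 0`, `F 1 = 1`, `F (n+2) = F (n+1) + F n`. -/
def fibMod (p : ℕ) : ℕ → ZMod p
  | 0 => 0
  | 1 => 1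
  | n + 2 => fibMod p (n + 1) + fibMod p n

/-- The Pisano period of `p`: the least `t > 0` with `F t = F 0 = 0` and `F (t+1) = F 1 = 1`. -/
noncomputable def pisano (p : ℕ) : ℕ :=
  sInf {t : ℕ | 0 < t ∧ fibMod p t = 0 ∧ fibMod p (t + 1) = 1}

/-- `β(p)`: the number of indices `0 ≤ i < l_p` with `F i = 0` in `ZMod p`. -/
noncomputable def betaP (p : ℕ) : ℕ :=
  ((Finset.range (pisano p)).filter fun i => fibMod p i = 0).card

/-- The Fibonacci polynomial `f(x) = ∑_{i=0}^{l_p - 1} F_i x^i` over `ZMod p`. -/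
noncomputable def fibPoly (p : ℕ) : (ZMod p)[X] :=
  ∑ i ∈ Finset.range (pisano p), C (fibMod p i) * X ^ i

/-- Cyclic shift of a vector of length `l`: the shift `v ↦ (v_{l-1}, v_0, …, v_{l-2})`,
which corresponds to multiplication by `x` modulo `x^l - 1` on coefficient vectors. -/
def cyclicShift (p l : ℕ) (v : Fin l → ZMod p) : Fin l → ZMod p :=
  fun i => v ⟨((i : ℕ) + (l - 1)) % l, Nat.mod_lt _ i.pos⟩

/-- The coefficient vector of length `l` of a polynomial. -/
def polyVec (p l : ℕ) (g : (ZMod p)[X]) : Fin l → ZMod p := fun i => g.coeff i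

/-- The cyclic code of length `l` generated by `g`: the ideal generated by the image of `g`
in `F_p[x]/(x^l - 1)`, identified with the subspace of `F_p^l` of coefficient vectors via
`a_0 + a_1 x + ⋯ + a_{l-1} x^{l-1} ↦ (a_0, …, a_{l-1})`; equivalently (since multiplication
by `x` is the cyclic shift), the `F_p`-span of all cyclic shifts of the coefficient vector
of `g`. -/
noncomputable def cyclicCode (p l : ℕ) (g : (ZMod p)[X]) :
    Submodule (ZMod p) (Fin l → ZMod p) :=
  Submodule.span (ZMod p) {w | ∃ k : ℕ, w = (cyclicShift p l)^[k] (polyVec p l g)}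

/-- The cyclic code of length `l` generated by the Fibonacci polynomial `f(x)`. -/
noncomputable def fibCode (p l : ℕ) : Submodule (ZMod p) (Fin l → ZMod p) :=
  cyclicCode p l (fibPoly p)


section Aux
variable (p : ℕ)

lemma fibMod_zero : fibMod p 0 = 0 := rfl
lemma fibMod_one : fibMod p 1 = 1 := rfl
lemma fibMod_two : fibMod p 2 = 1 := by simp [fibMod]
lemma fibMod_add_two (n : ℕ) : fibMod p (n + 2) = fibMod p (n + 1) + fibMod p n := by
  simp [fibMod]

/-- Addition formula. -/
lemma fibMod_add (d n : ℕ) :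
    fibMod p (n + d + 1) = fibMod p (d + 1) * fibMod p (n + 1) + fibMod p d * fibMod p n := by
  induction n using Nat.twoStepInduction with
  | zero => simp [fibMod_zero, fibMod_one]
  | one =>
    simp only [show 1 + d + 1 = d + 2 from by omega, show (1:ℕ) + 1 = 2 from rfl]
    rw [fibMod_add_two p d, fibMod_two, fibMod_one]
    ring
  | more n ih1 ih2 =>
    simp only [show n + 2 + d + 1 = n + d + 3 from by omega,
      show n + 1 + d + 1 = n + d + 2 from by omega,
      show n + 2 + 1 = n + 3 from by omega] at *
    rw [show n + d + 3 = (n + d + 1) + 2 from by omega, fibMod_add_two p (n + d + 1),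
      show n + d + 1 + 1 = n + d + 2 from rfl, ih2, ih1,
      show n + 3 = (n + 1) + 2 from by omega, fibMod_add_two p (n + 1),
      fibMod_add_two p n]
    ring

/-- d'Ocagne-type identity. -/
lemma fibMod_docagne (n d : ℕ) :
    fibMod p (n + d) * fibMod p (n + 1) - fibMod p (n + d + 1) * fibMod p n
      = (-1) ^ n * fibMod p d := by
  induction n with
  | zero => simp [fibMod_zero, fibMod_one]
  | succ n ih =>
    simp only [show n + 1 + d = n + d + 1 from by omega,
      show n + d + 1 + 1 = n + d + 2 from rfl, show n + 1 + 1 = n + 2 from rfl]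
    rw [fibMod_add_two p (n + d), fibMod_add_two p n]
    linear_combination (-1 : ZMod p) * ih

end Aux

section Period
variable {p L : ℕ} (hL0 : fibMod p L = 0) (hL1 : fibMod p (L + 1) = 1)

include hL0 hL1 in
lemma fibMod_period : ∀ n, fibMod p (n + L) = fibMod p n := by
  intro n
  induction n using Nat.twoStepInduction with
  | zero => simpa [fibMod_zero] using hL0
  | one => rw [show 1 + L = L + 1 from by omega, hL1, fibMod_one]
  | more n ih1 ih2 =>
    rw [show n + 2 + L = (n + L) + 2 from by omega, fibMod_add_two,
      show n + L + 1 = (n + 1) + L from by omega, ih2, ih1, fibMod_add_two]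

include hL0 hL1 in
lemma fibMod_period_mul (n : ℕ) : ∀ k, fibMod p (n + k * L) = fibMod p n := by
  intro k
  induction k with
  | zero => simp
  | succ k ih =>
    rw [show n + (k + 1) * L = (n + k * L) + L from by ring, fibMod_period hL0 hL1, ih]

include hL0 hL1 in
lemma fibMod_not_consec (hp : (1 : ZMod p) ≠ 0) (hLpos : 0 < L) (n : ℕ) :
    ¬ (fibMod p n = 0 ∧ fibMod p (n + 1) = 0) := by
  rintro ⟨h0, h1⟩
  have all : ∀ k, fibMod p (n + k) = 0 ∧ fibMod p (n + k + 1) = 0 := by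
    intro k
    induction k with
    | zero => exact ⟨h0, h1⟩
    | succ k ih =>
      refine ⟨ih.2, ?_⟩
      rw [show n + (k + 1) + 1 = (n + k) + 2 from by omega, fibMod_add_two, ih.1, ih.2]
      simp
  have hk := (all ((L - n % L) + 1)).1
  have hmod : n % L < L := Nat.mod_lt _ hLpos
  have hdiv := Nat.mod_add_div n L
  have he : n + ((L - n % L) + 1) = 1 + (n / L + 1) * L := by
    have h2 : (n / L + 1) * L = L * (n / L) + L := by ring
    omega
  rw [he, fibMod_period_mul hL0 hL1, fibMod_one] at hk
  exact hp hk
end Period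

section Rank
variable {p m : ℕ} [Fact p.Prime]
variable (hmpos : 0 < m) (hm0 : fibMod p m = 0) (hc : fibMod p (m + 1) ≠ 0)

include hm0 in
lemma fibMod_rank_shift (s : ℕ) : fibMod p (s + m) = fibMod p (m + 1) * fibMod p s := by
  cases s with
  | zero => simp [fibMod_zero, hm0]
  | succ s =>
    rw [show s + 1 + m = s + m + 1 from by omega, fibMod_add p m s, hm0]
    ring

include hm0 in
lemma fibMod_rank_shift_mul (s : ℕ) :
    ∀ k, fibMod p (s + k * m) = (fibMod p (m + 1)) ^ k * fibMod p s := by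
  intro k
  induction k with
  | zero => simp
  | succ k ih =>
    rw [show s + (k + 1) * m = (s + k * m) + m from by ring, fibMod_rank_shift hm0, ih]
    ring

include hmpos hm0 hc in
lemma fibMod_eq_zero_iff (hmin : ∀ t, 0 < t → t < m → fibMod p t ≠ 0) (n : ℕ) :
    fibMod p n = 0 ↔ m ∣ n := by
  constructor
  · intro hn
    have he : n = n % m + (n / m) * m := by
      have h1 := Nat.mod_add_div n m
      have h2 : (n / m) * m = m * (n / m) := Nat.mul_comm _ _
      omega
    rw [he, fibMod_rank_shift_mul hm0] at hn
    have hcpow : (fibMod p (m + 1)) ^ (n / m) ≠ 0 := pow_ne_zero _ hc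
    have hr : fibMod p (n % m) = 0 := by
      rcases mul_eq_zero.1 hn with h | h
      · exact absurd h hcpow
      · exact h
    have : n % m = 0 := by
      by_contra hne
      exact hmin _ (Nat.pos_of_ne_zero hne) (Nat.mod_lt _ hmpos) hr
    exact Nat.dvd_of_mod_eq_zero this
  · rintro ⟨k, rfl⟩
    rw [show m * k = 0 + k * m from by ring, fibMod_rank_shift_mul hm0, fibMod_zero]
    ring
end Rank

lemma count_multiples {m L : ℕ} (hm : 0 < m) (hd : m ∣ L) :
    ((Finset.range L).filter (fun i => m ∣ i)).card = L / m := by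
  have himg : (Finset.range L).filter (fun i => m ∣ i)
      = (Finset.range (L / m)).image (fun q => q * m) := by
    ext i
    simp only [Finset.mem_filter, Finset.mem_range, Finset.mem_image]
    constructor
    · rintro ⟨hiL, k, rfl⟩
      exact ⟨k, by rw [Nat.lt_div_iff_mul_lt' hd]; exact hiL, Nat.mul_comm _ _⟩
    · rintro ⟨q, hq, rfl⟩
      exact ⟨by rw [Nat.lt_div_iff_mul_lt' hd] at hq; rw [Nat.mul_comm]; exact hq, ⟨q, Nat.mul_comm _ _⟩⟩
  rw [himg, Finset.card_image_of_injective _ fun a b h => by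
    exact Nat.eq_of_mul_eq_mul_right hm h, Finset.card_range]

section Count
variable {p : ℕ} [Fact p.Prime]

lemma fibMod_det_dvd (hzero : ∀ n, fibMod p n = 0 ↔ (p + 1) ∣ n) (i j : ℕ) (hij : i ≤ j)
    (hd : fibMod p j * fibMod p (i + 1) = fibMod p (j + 1) * fibMod p i) :
    (p + 1) ∣ (j - i) := by
  have hdoc := fibMod_docagne p i (j - i)
  rw [show i + (j - i) = j from by omega] at hdoc
  rw [hd, sub_self] at hdoc
  have h1 : ((-1 : ZMod p)) ^ i ≠ 0 := pow_ne_zero _ (neg_ne_zero.mpr one_ne_zero)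
  have hfd : fibMod p (j - i) = 0 := by
    rcases mul_eq_zero.1 hdoc.symm with h | h
    · exact absurd h h1
    · exact h
  exact (hzero _).1 hfd

lemma zero_count (hzero : ∀ n, fibMod p n = 0 ↔ (p + 1) ∣ n)
    (a b : ZMod p) (hab : ¬(a = 0 ∧ b = 0)) :
    ((Finset.range (2 * p + 2)).filter
      (fun i => a * fibMod p i + b * fibMod p (i + 1) = 0)).card = 2 := by
  have hp2 : 2 ≤ p := (Fact.out : p.Prime).two_le
  haveI : NeZero p := ⟨(Fact.out : p.Prime).ne_zero⟩
  have hm0 : fibMod p (p + 1) = 0 := (hzero _).2 ⟨1, (Nat.mul_one _).symm⟩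
  have hc : fibMod p (p + 1 + 1) ≠ 0 := by
    intro h
    rcases (hzero _).1 h with ⟨k, hk⟩
    have h2 : k ≤ 1 ∨ 2 ≤ k := by omega
    rcases h2 with h2 | h2
    · interval_cases k <;> omega
    · have := Nat.mul_le_mul_left (p + 1) h2; omega
  -- any two zeros of the word differ by a multiple of p+1
  have hcd : ∀ i j, i ≤ j → a * fibMod p i + b * fibMod p (i + 1) = 0 →
      a * fibMod p j + b * fibMod p (j + 1) = 0 → (p + 1) ∣ (j - i) := by
    intro i j hij hi hj
    apply fibMod_det_dvd hzero i j hij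
    have ha0 : a * (fibMod p j * fibMod p (i + 1) - fibMod p (j + 1) * fibMod p i) = 0 := by
      linear_combination fibMod p (i + 1) * hj - fibMod p (j + 1) * hi
    have hb0 : b * (fibMod p j * fibMod p (i + 1) - fibMod p (j + 1) * fibMod p i) = 0 := by
      linear_combination fibMod p j * hi - fibMod p i * hj
    by_cases ha : a = 0
    · have hb : b ≠ 0 := fun h => hab ⟨ha, h⟩
      have h0 := (mul_eq_zero.1 hb0).resolve_left hb
      linear_combination h0
    · have h0 := (mul_eq_zero.1 ha0).resolve_left ha
      linear_combination h0
  -- existence of a zero below p+1, by pigeonhole on the projective line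
  have hexists : ∃ i, i < p + 1 ∧ a * fibMod p i + b * fibMod p (i + 1) = 0 := by
    set φ : Fin (p + 1) → Option (ZMod p) := fun i =>
      if fibMod p i.val = 0 then none
      else some (fibMod p (i.val + 1) * (fibMod p i.val)⁻¹) with hφ
    have key : ∀ x y : Fin (p + 1), x.val ≤ y.val → φ x = φ y → x = y := by
      intro x y hxy hkey
      by_cases h1 : fibMod p x.val = 0 <;> by_cases h2 : fibMod p y.val = 0 <;>
        simp only [hφ, h1, h2, if_pos, if_neg, if_true, if_false] at hkey
      · have hdx : (p + 1) ∣ x.val := (hzero _).1 h1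
        have hdy : (p + 1) ∣ y.val := (hzero _).1 h2
        have hx0 : x.val = 0 := Nat.eq_zero_of_dvd_of_lt hdx x.isLt
        have hy0 : y.val = 0 := Nat.eq_zero_of_dvd_of_lt hdy y.isLt
        apply Fin.ext; omega
      · exact absurd hkey (by simp)
      · exact absurd hkey (by simp)
      · have hs := Option.some_injective _ hkey
        have hd : fibMod p y.val * fibMod p (x.val + 1)
            = fibMod p (y.val + 1) * fibMod p x.val := by
          field_simp at hs
          linear_combination hs
        have hdvd := fibMod_det_dvd hzero x.val y.val hxy hd
        have h0 : y.val - x.val = 0 := Nat.eq_zero_of_dvd_of_lt hdvd (by omega)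
        apply Fin.ext; omega
    have hinj : Function.Injective φ := by
      intro i j h
      rcases le_total i.val j.val with hle | hle
      · exact key i j hle h
      · exact (key j i hle h.symm).symm
    have hbij : Function.Bijective φ := by
      rw [Fintype.bijective_iff_injective_and_card]
      refine ⟨hinj, ?_⟩
      simp [Fintype.card_option, ZMod.card]
    by_cases hb : b = 0
    · obtain ⟨i, hi⟩ := hbij.2 none
      refine ⟨i.val, i.isLt, ?_⟩
      by_cases h1 : fibMod p i.val = 0
      · rw [h1, hb]; ring
      · simp only [hφ, h1, if_neg, if_false] at hi
        exact absurd hi (by simp)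
    · obtain ⟨i, hi⟩ := hbij.2 (some (-(a * b⁻¹)))
      refine ⟨i.val, i.isLt, ?_⟩
      by_cases h1 : fibMod p i.val = 0
      · simp only [hφ, h1, if_pos, if_true] at hi
        exact absurd hi (by simp)
      · simp only [hφ, h1, if_neg, if_false] at hi
        have hs := Option.some_injective _ hi
        field_simp at hs
        linear_combination hs
  obtain ⟨i₀, hi₀lt, hi₀⟩ := hexists
  have hset : (Finset.range (2 * p + 2)).filter
      (fun i => a * fibMod p i + b * fibMod p (i + 1) = 0) = {i₀, i₀ + (p + 1)} := by
    ext j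
    simp only [Finset.mem_filter, Finset.mem_range, Finset.mem_insert, Finset.mem_singleton]
    constructor
    · rintro ⟨hjL, hj⟩
      rcases le_total i₀ j with h | h
      · rcases hcd i₀ j h hi₀ hj with ⟨k, hk⟩
        have h2 : k ≤ 1 ∨ 2 ≤ k := by omega
        rcases h2 with h2 | h2
        · interval_cases k <;> omega
        · have := Nat.mul_le_mul_left (p + 1) h2; omega
      · have hd := hcd j i₀ h hj hi₀
        have h0 : i₀ - j = 0 := Nat.eq_zero_of_dvd_of_lt hd (by omega)
        left; omega
    · rintro (rfl | rfl)
      · exact ⟨by omega, hi₀⟩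
      · refine ⟨by omega, ?_⟩
        have h1 : fibMod p (i₀ + (p + 1)) = fibMod p (p + 1 + 1) * fibMod p i₀ :=
          fibMod_rank_shift hm0 i₀
        have h2 : fibMod p (i₀ + (p + 1) + 1) = fibMod p (p + 1 + 1) * fibMod p (i₀ + 1) := by
          rw [show i₀ + (p + 1) + 1 = (i₀ + 1) + (p + 1) from by omega]
          exact fibMod_rank_shift hm0 _
        rw [h1, h2]
        linear_combination fibMod p (p + 1 + 1) * hi₀
  rw [hset, Finset.card_insert_of_notMem (by simp), Finset.card_singleton]
end Count

lemma fin_filter_card (L : ℕ) (P : ℕ → Prop) [DecidablePred P] :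
    (Finset.univ.filter (fun i : Fin L => P i.val)).card
      = ((Finset.range L).filter P).card := by
  apply Finset.card_bij (fun i _ => i.val)
  · intro a ha
    simp only [Finset.mem_filter, Finset.mem_univ, true_and] at ha
    simp only [Finset.mem_filter, Finset.mem_range]
    exact ⟨a.isLt, ha⟩
  · intro a₁ ha₁ a₂ ha₂ h
    exact Fin.ext h
  · intro b hb
    simp only [Finset.mem_filter, Finset.mem_range] at hb
    exact ⟨⟨b, hb.1⟩, by simpa using hb.2, rfl⟩

/-- For an odd prime `p` with `l_p = 2p + 2` and `β(p) = 2`, the cyclic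
code `C = ⟨f(x)⟩` of length `2p + 2` is a one-weight code: it has exactly `p² - 1` nonzero
codewords, and every nonzero codeword has Hamming weight exactly `2p`. -/
theorem fibCode_one_weight (p : ℕ) [Fact p.Prime] (hodd : Odd p)
    (hl : pisano p = 2 * p + 2) (hb : betaP p = 2) :
    Set.ncard {v | v ∈ fibCode p (2 * p + 2) ∧ v ≠ 0} = p ^ 2 - 1 ∧
      ∀ v ∈ fibCode p (2 * p + 2), v ≠ 0 → hammingNorm v = 2 * p := by
  classical
  have hp := (Fact.out : p.Prime)
  have hp2 : 2 ≤ p := hp.two_le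
  haveI : NeZero p := ⟨hp.ne_zero⟩
  -- pisano membership
  have hmemP : 0 < pisano p ∧ fibMod p (pisano p) = 0 ∧ fibMod p (pisano p + 1) = 1 := by
    have hne : {t : ℕ | 0 < t ∧ fibMod p t = 0 ∧ fibMod p (t + 1) = 1}.Nonempty := by
      by_contra hempty
      rw [Set.not_nonempty_iff_eq_empty] at hempty
      rw [pisano, hempty, Nat.sInf_empty] at hl
      omega
    rw [pisano]
    exact Nat.sInf_mem hne
  rw [hl] at hmemP
  obtain ⟨-, hL0, hL1⟩ := hmemP
  -- the rank of apparition
  have hZne : {t : ℕ | 0 < t ∧ fibMod p t = 0}.Nonempty := ⟨2 * p + 2, by omega, hL0⟩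
  set m := sInf {t : ℕ | 0 < t ∧ fibMod p t = 0} with hmdef
  obtain ⟨hmpos, hm0⟩ := Nat.sInf_mem hZne
  rw [← hmdef] at hmpos hm0
  have hmin : ∀ t, 0 < t → t < m → fibMod p t ≠ 0 := by
    intro t ht hlt hzt
    have := Nat.sInf_le (show t ∈ {t : ℕ | 0 < t ∧ fibMod p t = 0} from ⟨ht, hzt⟩)
    omega
  have hcns := fibMod_not_consec hL0 hL1 (one_ne_zero) (by omega)
  have hc : fibMod p (m + 1) ≠ 0 := fun h => hcns m ⟨hm0, h⟩
  have hz : ∀ n, fibMod p n = 0 ↔ m ∣ n := fibMod_eq_zero_iff hmpos hm0 hc hmin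
  have hmdvd : m ∣ 2 * p + 2 := (hz _).1 hL0
  -- m = p + 1 from β(p) = 2
  have hbcount : ((Finset.range (2 * p + 2)).filter (fun i => fibMod p i = 0)).card = 2 := by
    rw [betaP, hl] at hb; exact hb
  have hfeq : (Finset.range (2 * p + 2)).filter (fun i => fibMod p i = 0)
      = (Finset.range (2 * p + 2)).filter (fun i => m ∣ i) := by
    apply Finset.filter_congr
    intro i _
    simpa using hz i
  rw [hfeq, count_multiples hmpos hmdvd] at hbcount
  have hm_eq : m = p + 1 := by
    rcases hmdvd with ⟨k, hk⟩
    have hdk : (2 * p + 2) / m = k := by rw [hk]; exact Nat.mul_div_cancel_left k hmpos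
    rw [hdk] at hbcount
    subst hbcount
    omega
  rw [hm_eq] at hz
  -- F(2p+1) = 1
  have hF2p1 : fibMod p (2 * p + 1) = 1 := by
    have h := fibMod_add_two p (2 * p + 1)
    rw [show 2 * p + 1 + 2 = 2 * p + 2 + 1 from by omega, hL1,
      show 2 * p + 1 + 1 = 2 * p + 2 from by omega, hL0] at h
    linear_combination -h
  -- the two-parameter family of codewords
  set Lf : ZMod p → ZMod p → (Fin (2 * p + 2) → ZMod p) :=
    fun a b => fun i => a * fibMod p i.val + b * fibMod p (i.val + 1) with hLf
  have hshift : ∀ a b, cyclicShift p (2 * p + 2) (Lf a b) = Lf (b - a) a := by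
    intro a b
    funext i
    simp only [cyclicShift, hLf]
    rcases i with ⟨iv, hlt⟩
    simp only []
    cases iv with
    | zero =>
      have hmod : ((0 : ℕ) + (2 * p + 2 - 1)) % (2 * p + 2) = 2 * p + 1 := by
        rw [show (0 : ℕ) + (2 * p + 2 - 1) = 2 * p + 1 from by omega]
        exact Nat.mod_eq_of_lt (by omega)
      rw [hmod, show (2 : ℕ) * p + 1 + 1 = 2 * p + 2 from rfl, hF2p1, hL0,
        show (0 : ℕ) + 1 = 1 from rfl, fibMod_zero, fibMod_one]
      ring
    | succ k =>
      have hmod : ((k + 1 : ℕ) + (2 * p + 2 - 1)) % (2 * p + 2) = k := by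
        rw [show (k + 1 : ℕ) + (2 * p + 2 - 1) = k + (2 * p + 2) from by omega,
          Nat.add_mod_right]
        exact Nat.mod_eq_of_lt (by omega)
      rw [hmod, show (k + 1 : ℕ) + 1 = k + 2 from rfl, fibMod_add_two p k]
      ring
  -- the generating vector
  have hcoeff : ∀ n, n < 2 * p + 2 → (fibPoly p).coeff n = fibMod p n := by
    intro n hn
    rw [fibPoly, hl, Polynomial.finset_sum_coeff]
    simp only [Polynomial.coeff_C_mul, Polynomial.coeff_X_pow, mul_ite, mul_one, mul_zero]
    rw [Finset.sum_ite_eq (Finset.range (2 * p + 2)) n (fun i => fibMod p i)]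
    simp [hn]
  have hgen : polyVec p (2 * p + 2) (fibPoly p) = Lf 1 0 := by
    funext i
    simp only [polyVec, hLf]
    rw [hcoeff i.val i.isLt]
    ring
  have hiter : ∀ k : ℕ, ∃ a b : ZMod p,
      (cyclicShift p (2 * p + 2))^[k] (polyVec p (2 * p + 2) (fibPoly p)) = Lf a b := by
    intro k
    induction k with
    | zero => exact ⟨1, 0, hgen⟩
    | succ k ih =>
      obtain ⟨a, b, hab⟩ := ih
      exact ⟨b - a, a, by rw [Function.iterate_succ_apply', hab, hshift]⟩
  have hLfcomb : ∀ a b : ZMod p, a • Lf 1 0 + b • Lf 0 1 = Lf a b := by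
    intro a b
    funext i
    simp only [hLf, Pi.add_apply, Pi.smul_apply, smul_eq_mul]
    ring
  have hcode : ∀ v, v ∈ fibCode p (2 * p + 2) ↔ ∃ a b : ZMod p, v = Lf a b := by
    have hWle : fibCode p (2 * p + 2)
        ≤ Submodule.span (ZMod p) {Lf 1 0, Lf 0 1} := by
      rw [fibCode, cyclicCode]
      apply Submodule.span_le.2
      rintro w ⟨k, rfl⟩
      obtain ⟨a, b, hab⟩ := hiter k
      rw [hab, ← hLfcomb a b]
      exact Submodule.add_mem _
        (Submodule.smul_mem _ _ (Submodule.subset_span (by simp)))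
        (Submodule.smul_mem _ _ (Submodule.subset_span (by simp)))
    have hleW : Submodule.span (ZMod p) {Lf 1 0, Lf 0 1}
        ≤ fibCode p (2 * p + 2) := by
      apply Submodule.span_le.2
      rintro w hw
      rcases hw with h | h
      · rw [h]
        exact Submodule.subset_span ⟨0, by simp [hgen]⟩
      · rw [Set.mem_singleton_iff] at h
        rw [h]
        have he : Lf 0 1 = Lf 1 0 + Lf (0 - 1) 1 := by
          funext i; simp only [hLf, Pi.add_apply]; ring
        rw [he]
        refine Submodule.add_mem _ (Submodule.subset_span ⟨0, by simp [hgen]⟩)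
          (Submodule.subset_span ⟨1, ?_⟩)
        rw [Function.iterate_one, hgen, hshift]
    intro v
    constructor
    · intro hv
      obtain ⟨c, d, hcd'⟩ := Submodule.mem_span_pair.1 (hWle hv)
      exact ⟨c, d, by rw [← hcd', hLfcomb]⟩
    · rintro ⟨a, b, rfl⟩
      exact hleW (Submodule.mem_span_pair.2 ⟨a, b, hLfcomb a b⟩)
  -- injectivity
  have hinj : ∀ a b a' b' : ZMod p, Lf a b = Lf a' b' → a = a' ∧ b = b' := by
    intro a b a' b' h
    have h0 := congrFun h ⟨0, by omega⟩
    have h1 := congrFun h ⟨1, by omega⟩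
    simp only [hLf, Fin.val_mk] at h0 h1
    rw [show ((0 : ℕ) + 1) = 1 from rfl, fibMod_zero, fibMod_one] at h0
    rw [show ((1 : ℕ) + 1) = 2 from rfl, fibMod_one, fibMod_two] at h1
    constructor
    · linear_combination h1 - h0
    · linear_combination h0
  have hz00 : Lf 0 0 = 0 := by
    funext i; simp only [hLf, Pi.zero_apply]; ring
  constructor
  · -- cardinality
    have hSeq : {v | v ∈ fibCode p (2 * p + 2) ∧ v ≠ 0}
        = (fun ab : ZMod p × ZMod p => Lf ab.1 ab.2) '' {ab | ab ≠ 0} := by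
      ext v
      simp only [Set.mem_setOf_eq, Set.mem_image]
      constructor
      · rintro ⟨hv, hvne⟩
        obtain ⟨a, b, rfl⟩ := (hcode _).1 hv
        refine ⟨(a, b), ?_, rfl⟩
        intro h
        apply hvne
        have ha : a = 0 := by rw [Prod.ext_iff] at h; exact h.1
        have hbz : b = 0 := by rw [Prod.ext_iff] at h; exact h.2
        rw [ha, hbz, hz00]
      · rintro ⟨⟨a, b⟩, habne, rfl⟩
        refine ⟨(hcode _).2 ⟨a, b, rfl⟩, ?_⟩
        intro h0
        apply habne
        have := hinj a b 0 0 (by rw [hz00]; exact h0)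
        simp [Prod.ext_iff, this.1, this.2]
    rw [hSeq, Set.ncard_image_of_injOn (by
      intro x _ y _ h
      have := hinj x.1 x.2 y.1 y.2 h
      exact Prod.ext this.1 this.2)]
    rw [show {ab : ZMod p × ZMod p | ab ≠ 0} = Set.univ \ {0} from by ext; simp]
    rw [Set.ncard_diff (Set.subset_univ _), Set.ncard_univ, Set.ncard_singleton]
    rw [Nat.card_eq_fintype_card, Fintype.card_prod, ZMod.card]
    ring_nf
  · -- weights
    intro v hv hvne
    obtain ⟨a, b, rfl⟩ := (hcode _).1 hv
    have hab : ¬(a = 0 ∧ b = 0) := by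
      rintro ⟨rfl, rfl⟩
      exact hvne hz00
    have hzc := zero_count hz a b hab
    have hfz : (Finset.univ.filter (fun i : Fin (2 * p + 2) => Lf a b i = 0)).card = 2 := by
      have heq : (Finset.univ.filter (fun i : Fin (2 * p + 2) => Lf a b i = 0))
          = (Finset.univ.filter
              (fun i : Fin (2 * p + 2) => a * fibMod p i.val + b * fibMod p (i.val + 1) = 0)) := by
        apply Finset.filter_congr
        intro i _
        simp [hLf]
      rw [heq, fin_filter_card (2 * p + 2) (fun n => a * fibMod p n + b * fibMod p (n + 1) = 0)]
      exact hzc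
    have hsplit := Finset.card_filter_add_card_filter_not
      (s := (Finset.univ : Finset (Fin (2 * p + 2))))
      (p := fun i => Lf a b i = 0)
    have hcu : (Finset.univ : Finset (Fin (2 * p + 2))).card = 2 * p + 2 := by
      simp
    have hnorm : hammingNorm (Lf a b)
        = (Finset.univ.filter (fun i : Fin (2 * p + 2) => ¬ (Lf a b i = 0))).card := rfl
    rw [hnorm]
    omega
end

section
/- Let p be an odd prime with Pisano period l_p = 2p+2 and β(p) = 2, and let C = ⟨f(x)⟩ be the cyclic code of parameters [2p+2, 2, 2p] over F_p generated by the Fibonacci polynomial f(x) (coordinates indexed 0, 1, …, 2p+1). Then C has exactly p minimal codewords; coordinate p+1 belongs to the support of every minimal codeword of C; and for each coordinate i with 1 ≤ i ≤ 2p+1 and i ≠ p+1, exactly p−1 of the minimal codewords of C have i in their support. -/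
open Polynomial

/-- A minimal codeword of a code `Cc ⊆ F_p^l`: a nonzero codeword `c` with first coordinate
`c 0 = 1` such that every codeword of `Cc` whose support is contained in `supp(c)` is a
scalar multiple of `c`. -/
def IsMinimalCodeword (p l : ℕ) (Cc : Submodule (ZMod p) (Fin l → ZMod p))
    (c : Fin l → ZMod p) : Prop :=
  c ∈ Cc ∧ c ≠ 0 ∧ (∀ h : 0 < l, c ⟨0, h⟩ = 1) ∧
    ∀ v ∈ Cc, (∀ i, v i ≠ 0 → c i ≠ 0) → ∃ k : ZMod p, v = k • c

namespace FibAux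
variable {p : ℕ}

lemma fib0 : fibMod p 0 = 0 := rfl
lemma fib1 : fibMod p 1 = 1 := rfl
lemma fib2 (n : ℕ) : fibMod p (n+2) = fibMod p (n+1) + fibMod p n := rfl

/-- Catalan-type identity. -/
lemma fib_cat (k : ℕ) : ∀ n, fibMod p (n+k) * fibMod p (n+1) - fibMod p (n+k+1) * fibMod p n
    = (-1)^n * fibMod p k := by
  intro n
  induction n with
  | zero => simp [fib1, fib0]
  | succ n ih =>
    have h1 : fibMod p (n+1+k) = fibMod p (n+k+1) := by ring_nf
    have h2 : fibMod p (n+1+k+1) = fibMod p (n+k+1) + fibMod p (n+k) := by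
      have : n+1+k+1 = (n+k)+2 := by ring
      rw [this, fib2]
    have h3 : fibMod p (n+1+1) = fibMod p (n+1) + fibMod p n := fib2 n
    rw [h1, h2, h3]
    have : fibMod p (n + k + 1) * (fibMod p (n + 1) + fibMod p n) -
        (fibMod p (n + k + 1) + fibMod p (n + k)) * fibMod p (n + 1)
        = -(fibMod p (n+k) * fibMod p (n+1) - fibMod p (n+k+1) * fibMod p n) := by ring
    rw [this, ih]; ring

/-- If `F j = 0` then `F (n+j) = F (j+1) * F n`. -/
lemma fib_shift {j : ℕ} (h0 : fibMod p j = 0) :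
    ∀ n, fibMod p (n + j) = fibMod p (j+1) * fibMod p n := by
  intro n
  induction n using Nat.twoStepInduction with
  | zero => simp [fib0, h0]
  | one => rw [Nat.add_comm]; simp [fib1]
  | more n ih1 ih2 =>
    have : n + 2 + j = (n + j) + 2 := by ring
    rw [this, fib2, fib2 n]
    have e1 : n + j + 1 = (n+1) + j := by ring
    rw [e1, ih2, ih1]; ring

/-- Periodicity from `F t = 0`, `F (t+1) = 1`. -/
lemma fib_periodic {t : ℕ} (h0 : fibMod p t = 0) (h1 : fibMod p (t+1) = 1) :
    ∀ n, fibMod p (n + t) = fibMod p n := by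
  intro n
  rw [fib_shift h0 n, h1, one_mul]

end FibAux

namespace FibAux
variable {p : ℕ} [Fact p.Prime]

lemma pisano_mem (hl : pisano p = 2*p+2) :
    fibMod p (2*p+2) = 0 ∧ fibMod p (2*p+2+1) = 1 := by
  have hne : {t : ℕ | 0 < t ∧ fibMod p t = 0 ∧ fibMod p (t + 1) = 1}.Nonempty := by
    by_contra h
    rw [Set.not_nonempty_iff_eq_empty] at h
    rw [pisano, h, Nat.sInf_empty] at hl
    omega
  have hmem := Nat.sInf_mem hne
  rw [← pisano, hl] at hmem
  exact ⟨hmem.2.1, hmem.2.2⟩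

lemma pisano_min (hl : pisano p = 2*p+2) {t : ℕ} (ht : 0 < t) (h0 : fibMod p t = 0)
    (h1 : fibMod p (t+1) = 1) : 2*p+2 ≤ t := by
  have := Nat.sInf_le (s := {t : ℕ | 0 < t ∧ fibMod p t = 0 ∧ fibMod p (t + 1) = 1})
    ⟨ht, h0, h1⟩
  rwa [← pisano, hl] at this

lemma fib_key (hl : pisano p = 2*p+2) (hb : betaP p = 2) :
    fibMod p (p+1) = 0 ∧ (∀ n, fibMod p (n + (p+1)) = - fibMod p n) ∧
    (∀ i, 0 < i → i < 2*p+2 → i ≠ p+1 → fibMod p i ≠ 0) ∧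
    (∀ n, fibMod p (n + (2*p+2)) = fibMod p n) ∧ fibMod p (2*p+1) = 1 := by
  obtain ⟨h0, h1⟩ := pisano_mem hl
  have hp2 : 2 ≤ p := (Fact.out : p.Prime).two_le
  have per : ∀ n, fibMod p (n + (2*p+2)) = fibMod p n := fib_periodic h0 h1
  have h21 : fibMod p (2*p+1) = 1 := by
    have e : 2*p+2+1 = (2*p+1)+2 := by ring
    rw [e, fib2] at h1
    have e2 : 2*p+1+1 = 2*p+2 := by ring
    rw [e2, h0, zero_add] at h1
    exact h1
  -- the filter of zeros
  set Fz := (Finset.range (2*p+2)).filter (fun i => fibMod p i = 0) with hFz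
  have hbF : Fz.card = 2 := by
    rw [betaP, hl] at hb; exact hb
  have h0mem : (0:ℕ) ∈ Fz := by
    simp [hFz, fib0]
  obtain ⟨a, ha, b, hbm, hab⟩ := Finset.one_lt_card.mp (by omega : 1 < Fz.card)
  have hjex : ∃ j ∈ Fz, j ≠ 0 := by
    rcases eq_or_ne a 0 with h | h
    · exact ⟨b, hbm, by omega⟩
    · exact ⟨a, ha, h⟩
  obtain ⟨j, hjm, hj0⟩ := hjex
  have hjlt : j < 2*p+2 := (Finset.mem_range.mp (Finset.mem_filter.mp hjm).1)
  have hjz : fibMod p j = 0 := (Finset.mem_filter.mp hjm).2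
  have hcne : fibMod p (j+1) ≠ 0 := by
    intro hc
    have h23 : fibMod p (2*p+3) = 0 := by
      have e : 2*p+3 = (2*p+3-j) + j := by omega
      rw [e, fib_shift hjz, hc, zero_mul]
    rw [show 2*p+3 = 2*p+2+1 by ring, h1] at h23
    exact one_ne_zero h23
  have hlj : fibMod p (2*p+2-j) = 0 := by
    have e : 2*p+2 = (2*p+2-j) + j := by omega
    rw [e, fib_shift hjz] at h0
    exact (mul_eq_zero.mp h0).resolve_left hcne
  have hFeq : ({0, j} : Finset ℕ) = Fz := by
    apply Finset.eq_of_subset_of_card_le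
    · intro x hx
      simp only [Finset.mem_insert, Finset.mem_singleton] at hx
      rcases hx with rfl | rfl
      · exact h0mem
      · exact hjm
    · rw [hbF, Finset.card_insert_of_notMem (by simp [Ne.symm hj0]), Finset.card_singleton]
  have hljmem : (2*p+2-j) ∈ Fz := by
    simp only [hFz, Finset.mem_filter, Finset.mem_range]
    exact ⟨by omega, hlj⟩
  have hjval : j = p + 1 := by
    rw [← hFeq] at hljmem
    simp only [Finset.mem_insert, Finset.mem_singleton] at hljmem
    omega
  subst hjval
  set c := fibMod p (p+1+1) with hc
  have hmul : ∀ n, fibMod p (n + (p+1)) = c * fibMod p n := fib_shift hjz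
  have hcc : c * c = 1 := by
    have e : 2*p+2+1 = (p+1+1) + (p+1) := by ring
    rw [e, hmul] at h1
    rw [← hc] at h1
    exact h1
  have hcne1 : c ≠ 1 := by
    intro h
    have := pisano_min hl (by omega : 0 < p+1) hjz (h ▸ hc.symm)
    omega
  have hcm1 : c = -1 := (mul_self_eq_one_iff.mp hcc).resolve_left hcne1
  have hneg : ∀ n, fibMod p (n + (p+1)) = - fibMod p n := by
    intro n; rw [hmul n, hcm1]; ring
  refine ⟨hjz, hneg, ?_, per, h21⟩
  intro i hi0 hilt hiv hzero
  have : i ∈ Fz := by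
    simp only [hFz, Finset.mem_filter, Finset.mem_range]
    exact ⟨hilt, hzero⟩
  rw [← hFeq] at this
  simp only [Finset.mem_insert, Finset.mem_singleton] at this
  omega

end FibAux

namespace FibAux
variable {p : ℕ} [Fact p.Prime]

lemma fib_neq (hnz : ∀ i, 0 < i → i < 2*p+2 → i ≠ p+1 → fibMod p i ≠ 0)
    {m k : ℕ} (hk : 1 ≤ k) (hmk : m+1+k ≤ p) :
    fibMod p (m+k) * fibMod p (m+1) ≠ fibMod p m * fibMod p (m+1+k) := by
  intro heq
  have hid := fib_cat (p := p) k m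
  have e : m + k + 1 = m + 1 + k := by ring
  rw [e, heq] at hid
  have : (-1 : ZMod p)^m * fibMod p k = 0 := by rw [← hid]; ring
  have hFk : fibMod p k = 0 := by
    rcases mul_eq_zero.mp this with h | h
    · exact absurd h (pow_ne_zero m (neg_ne_zero.mpr one_ne_zero))
    · exact h
  exact hnz k hk (by omega) (by omega) hFk

lemma fib_surj (hnz : ∀ i, 0 < i → i < 2*p+2 → i ≠ p+1 → fibMod p i ≠ 0)
    (a : ZMod p) : ∃ m, m + 1 ≤ p ∧ a * fibMod p (m+1) + fibMod p m = 0 := by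
  have hp2 : 2 ≤ p := (Fact.out : p.Prime).two_le
  set φ : ℕ → ZMod p := fun m => -fibMod p m * (fibMod p (m+1))⁻¹ with hφ
  have hFnz : ∀ m, m + 1 ≤ p → fibMod p (m+1) ≠ 0 := fun m hm =>
    hnz (m+1) (by omega) (by omega) (by omega)
  have hinj : Set.InjOn φ (Finset.range p : Finset ℕ) := by
    intro m hm m' hm' heq
    simp only [Finset.coe_range, Set.mem_Iio] at hm hm'
    by_contra hne
    have key : ∀ u v : ℕ, u < v → v < p → φ u = φ v → False := by
      intro u v huv hv hφeq
      have hu1 : fibMod p (u+1) ≠ 0 := hFnz u (by omega)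
      have hv1 : fibMod p (v+1) ≠ 0 := hFnz v (by omega)
      have hcross : fibMod p (v) * fibMod p (u+1) = fibMod p u * fibMod p (v+1) := by
        have := hφeq
        simp only [hφ] at this
        have hu' : fibMod p (u+1) * (fibMod p (u+1))⁻¹ = 1 := mul_inv_cancel₀ hu1
        have hv' : fibMod p (v+1) * (fibMod p (v+1))⁻¹ = 1 := mul_inv_cancel₀ hv1
        linear_combination (fibMod p (u+1) * fibMod p (v+1)) * this
          + fibMod p (v+1) * fibMod p u * hu' - fibMod p (u+1) * fibMod p v * hv'
      have e : v = u + (v - u) := by omega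
      rw [e] at hcross
      have e3 : u + (v - u) + 1 = u + 1 + (v - u) := by omega
      rw [e3] at hcross
      exact fib_neq hnz (by omega) (by omega) hcross
    rcases lt_trichotomy m m' with h | h | h
    · exact key m m' h hm' heq
    · exact hne h
    · exact key m' m h hm heq.symm
  have hcard : ((Finset.range p).image φ).card = p := by
    rw [Finset.card_image_of_injOn hinj, Finset.card_range]
  have huniv : (Finset.range p).image φ = Finset.univ := by
    apply Finset.eq_univ_of_card
    rw [hcard, ZMod.card p]
  have ha : a ∈ (Finset.range p).image φ := huniv ▸ Finset.mem_univ a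
  obtain ⟨m, hm, hφm⟩ := Finset.mem_image.mp ha
  rw [Finset.mem_range] at hm
  refine ⟨m, by omega, ?_⟩
  have hm1 : fibMod p (m+1) ≠ 0 := hFnz m (by omega)
  rw [← hφm]
  show -fibMod p m * (fibMod p (m+1))⁻¹ * fibMod p (m+1) + fibMod p m = 0
  rw [mul_assoc, inv_mul_cancel₀ hm1]; ring

end FibAux

namespace FibAux

def Vv (p : ℕ) : Fin (2*p+2) → ZMod p := fun i => fibMod p ↑i
def Wv (p : ℕ) : Fin (2*p+2) → ZMod p := fun i => fibMod p (↑i + (2*p+1))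

variable {p : ℕ} [Fact p.Prime]

lemma fibPoly_coeff (hl : pisano p = 2*p+2) {n : ℕ} (hn : n < 2*p+2) :
    (fibPoly p).coeff n = fibMod p n := by
  rw [fibPoly, Polynomial.finset_sum_coeff]
  simp only [Polynomial.coeff_C_mul, Polynomial.coeff_X_pow, mul_ite, mul_one, mul_zero]
  rw [Finset.sum_eq_single n]
  · simp
  · intro b _ hb
    simp [Ne.symm hb]
  · intro h
    exact absurd (Finset.mem_range.mpr (by omega : n < pisano p)) h

lemma polyVec_eq (hl : pisano p = 2*p+2) : polyVec p (2*p+2) (fibPoly p) = Vv p := by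
  funext i
  exact fibPoly_coeff hl i.isLt

section Per
variable (per : ∀ n, fibMod p (n + (2*p+2)) = fibMod p n)
include per

lemma fib_cong {a b : ℕ} (h : a % (2*p+2) = b % (2*p+2)) : fibMod p a = fibMod p b := by
  have hper : Function.Periodic (fibMod p) (2*p+2) := fun n => per n
  calc fibMod p a = fibMod p (a % (2*p+2)) := (hper.map_mod_nat a).symm
    _ = fibMod p (b % (2*p+2)) := by rw [h]
    _ = fibMod p b := hper.map_mod_nat b

lemma shift_fib (m : ℕ) :
    cyclicShift p (2*p+2) (fun i : Fin (2*p+2) => fibMod p (↑i + m)) =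
      fun i : Fin (2*p+2) => fibMod p (↑i + (m + (2*p+1))) := by
  funext i
  show fibMod p ((↑i + (2*p+2-1)) % (2*p+2) + m) = _
  rw [fib_cong per (Nat.mod_add_mod _ _ _)]
  congr 1
  omega

lemma shiftV : cyclicShift p (2*p+2) (Vv p) = Wv p := by
  have h : Vv p = fun i : Fin (2*p+2) => fibMod p (↑i + 0) := by funext i; rw [Nat.add_zero]; rfl
  rw [h, shift_fib per]
  funext i
  show fibMod p (↑i + (0 + (2*p+1))) = fibMod p (↑i + (2*p+1))
  rw [Nat.zero_add]

lemma shiftW : cyclicShift p (2*p+2) (Wv p) = Vv p - Wv p := by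
  funext i
  have hS : cyclicShift p (2*p+2) (Wv p) i = fibMod p (↑i + (2*p+1 + (2*p+1))) :=
    congrFun (shift_fib per (2*p+1)) i
  have h1 : fibMod p (↑i + (2*p+1 + (2*p+1))) = fibMod p (↑i + 2*p) := by
    have e : ↑i + (2*p+1 + (2*p+1)) = (↑i + 2*p) + (2*p+2) := by omega
    rw [e]; exact per _
  have h2 : fibMod p ↑i = fibMod p (↑i + (2*p+1)) + fibMod p (↑i + 2*p) := by
    have e : ↑i + (2*p+2) = (↑i + 2*p) + 2 := by omega
    have e2 : ↑i + 2*p + 1 = ↑i + (2*p+1) := by omega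
    rw [← per ↑i, e, fib2, e2]
  have h3 : (Vv p - Wv p) i = fibMod p ↑i - fibMod p (↑i + (2*p+1)) := rfl
  rw [hS, h1, h3, h2]
  ring

end Per

lemma code_eq (hl : pisano p = 2*p+2) (per : ∀ n, fibMod p (n + (2*p+2)) = fibMod p n) :
    fibCode p (2*p+2) = Submodule.span (ZMod p) {Vv p, Wv p} := by
  have hsmul : ∀ (a b : ZMod p) (x y : Fin (2*p+2) → ZMod p),
      cyclicShift p (2*p+2) (a • x + b • y) =
        a • cyclicShift p (2*p+2) x + b • cyclicShift p (2*p+2) y := by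
    intro a b x y; funext i; rfl
  have hinv : ∀ u, u ∈ Submodule.span (ZMod p) {Vv p, Wv p} →
      cyclicShift p (2*p+2) u ∈ Submodule.span (ZMod p) {Vv p, Wv p} := by
    intro u hu
    obtain ⟨a, b, hab⟩ := Submodule.mem_span_pair.mp hu
    rw [← hab, hsmul, shiftV per, shiftW per]
    have hV : Vv p ∈ Submodule.span (ZMod p) {Vv p, Wv p} :=
      Submodule.subset_span (by simp)
    have hW : Wv p ∈ Submodule.span (ZMod p) {Vv p, Wv p} :=
      Submodule.subset_span (by simp)
    exact Submodule.add_mem _ (Submodule.smul_mem _ _ hW)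
      (Submodule.smul_mem _ _ (Submodule.sub_mem _ hV hW))
  apply le_antisymm
  · rw [fibCode, cyclicCode]
    apply Submodule.span_le.mpr
    rintro w ⟨k, rfl⟩
    rw [polyVec_eq hl]
    induction k with
    | zero => exact Submodule.subset_span (by simp)
    | succ k ih =>
      rw [Function.iterate_succ_apply']
      exact hinv _ ih
  · apply Submodule.span_le.mpr
    rintro w (rfl | rfl)
    · exact Submodule.subset_span ⟨0, by simp [polyVec_eq hl]⟩
    · refine Submodule.subset_span ⟨1, ?_⟩
      simp only [Function.iterate_one]
      rw [polyVec_eq hl, shiftV per]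

end FibAux

/-- For an odd prime `p` with `l_p = 2p + 2` and `β(p) = 2`, the
`[2p+2, 2, 2p]` cyclic code `C = ⟨f(x)⟩` has exactly `p` minimal codewords; coordinate
`p + 1` lies in the support of every minimal codeword (a dictatorial participant in the
associated secret sharing scheme); and every other coordinate `i ≠ 0` lies in the support
of exactly `p - 1` minimal codewords. -/
theorem fibCode_minimal_codewords_long_beta_two (p : ℕ) [Fact p.Prime] (hodd : Odd p)
    (hl : pisano p = 2 * p + 2) (hb : betaP p = 2) :
    Set.ncard {c | IsMinimalCodeword p (2 * p + 2) (fibCode p (2 * p + 2)) c} = p ∧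
      (∀ i : Fin (2 * p + 2), (i : ℕ) = p + 1 →
        ∀ c, IsMinimalCodeword p (2 * p + 2) (fibCode p (2 * p + 2)) c → c i ≠ 0) ∧
      ∀ i : Fin (2 * p + 2), 1 ≤ (i : ℕ) → (i : ℕ) ≠ p + 1 →
        Set.ncard {c | IsMinimalCodeword p (2 * p + 2) (fibCode p (2 * p + 2)) c ∧
          c i ≠ 0} = p - 1 := by
  classical
  obtain ⟨hF0, hneg, hnz, per, h21⟩ := FibAux.fib_key hl hb
  have hp2 : 2 ≤ p := (Fact.out : p.Prime).two_le
  have hcode := FibAux.code_eq hl per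
  set V := FibAux.Vv p with hVdef
  set W := FibAux.Wv p with hWdef
  set f : ZMod p → (Fin (2*p+2) → ZMod p) := fun a => a • V + W with hfdef
  have happly : ∀ (a : ZMod p) (i : Fin (2*p+2)), f a i = a * V i + W i := by
    intro a i; simp [hfdef]
  have hVval : ∀ (i : Fin (2*p+2)) (m : ℕ), (i:ℕ) = m + 1 → V i = fibMod p (m+1) := by
    intro i m him
    show fibMod p ↑i = _
    rw [him]
  have hWval : ∀ (i : Fin (2*p+2)) (m : ℕ), (i:ℕ) = m + 1 → W i = fibMod p m := by
    intro i m him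
    show fibMod p (↑i + (2*p+1)) = _
    rw [him, show m+1+(2*p+1) = m + (2*p+2) by omega, per]
  have hfval : ∀ (a : ZMod p) (i : Fin (2*p+2)) (m : ℕ), (i:ℕ) = m + 1 →
      f a i = a * fibMod p (m+1) + fibMod p m := by
    intro a i m him
    rw [happly, hVval i m him, hWval i m him]
  have i0 : Fin (2*p+2) := ⟨0, by omega⟩
  have hV0 : ∀ (i : Fin (2*p+2)), (i:ℕ) = 0 → V i = 0 := by
    intro i him
    show fibMod p ↑i = 0
    rw [him]
    rfl
  have hW0 : ∀ (i : Fin (2*p+2)), (i:ℕ) = 0 → W i = 1 := by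
    intro i him
    show fibMod p (↑i + (2*p+1)) = 1
    rw [him, Nat.zero_add, h21]
  have hf0 : ∀ (a : ZMod p) (i : Fin (2*p+2)), (i:ℕ) = 0 → f a i = 1 := by
    intro a i him
    rw [happly, hV0 i him, hW0 i him, mul_zero, zero_add]
  have hmemf : ∀ a : ZMod p, f a ∈ fibCode p (2*p+2) := by
    intro a
    rw [hcode]
    exact Submodule.mem_span_pair.mpr ⟨a, 1, by rw [one_smul]⟩
  have hinj : Function.Injective f := by
    intro a b hab
    have h1 : f a ⟨1, by omega⟩ = f b ⟨1, by omega⟩ := by rw [hab]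
    rw [hfval a _ 0 rfl, hfval b _ 0 rfl] at h1
    simpa [FibAux.fib0, FibAux.fib1] using h1
  -- every f a is a minimal codeword
  have hmin : ∀ a : ZMod p, IsMinimalCodeword p (2*p+2) (fibCode p (2*p+2)) (f a) := by
    intro a
    refine ⟨hmemf a, ?_, ?_, ?_⟩
    · intro h0
      have := congrFun h0 ⟨0, by omega⟩
      rw [hf0 a _ rfl] at this
      exact one_ne_zero this
    · intro h
      exact hf0 a _ rfl
    · intro v hv hsupp
      obtain ⟨α, β, hv'⟩ := Submodule.mem_span_pair.mp (hcode ▸ hv)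
      obtain ⟨m, hm, hma⟩ := FibAux.fib_surj hnz a
      set iz : Fin (2*p+2) := ⟨m+1, by omega⟩ with hiz
      have hfz : f a iz = 0 := by rw [hfval a iz m rfl]; exact hma
      have hvz : v iz = 0 := by
        by_contra h
        exact (hsupp iz h) hfz
      have heq : α * fibMod p (m+1) + β * fibMod p m = 0 := by
        have := congrFun hv' iz
        rw [hvz] at this
        have hVz : V iz = fibMod p (m+1) := hVval iz m rfl
        have hWz : W iz = fibMod p m := hWval iz m rfl
        calc α * fibMod p (m+1) + β * fibMod p m
            = (α • V + β • W) iz := by rw [← hVz, ← hWz]; simp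
          _ = 0 := this
      have hFm1 : fibMod p (m+1) ≠ 0 := hnz (m+1) (by omega) (by omega) (by omega)
      have hαβ : α = β * a := by
        have hz : (α - β * a) * fibMod p (m+1) = 0 := by
          linear_combination heq - β * hma
        rcases mul_eq_zero.mp hz with h | h
        · exact sub_eq_zero.mp h
        · exact absurd h hFm1
      refine ⟨β, ?_⟩
      rw [← hv']
      funext j
      simp only [Pi.add_apply, Pi.smul_apply, smul_eq_mul, happly]
      rw [hαβ]
      ring
  -- the set of minimal codewords is exactly the range of f
  have hMeq : {c | IsMinimalCodeword p (2*p+2) (fibCode p (2*p+2)) c} = Set.range f := by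
    ext c
    constructor
    · rintro ⟨hcm, -, hc0, -⟩
      obtain ⟨α, β, hc⟩ := Submodule.mem_span_pair.mp (hcode ▸ hcm)
      have hβ : β = 1 := by
        have h0' := congrFun hc ⟨0, by omega⟩
        rw [hc0 (by omega)] at h0'
        have : α * V ⟨0, by omega⟩ + β * W ⟨0, by omega⟩ = 1 := by
          rw [← h0']; simp
        rwa [hV0 _ rfl, hW0 _ rfl, mul_zero, zero_add, mul_one] at this
      refine ⟨α, ?_⟩
      rw [hβ, one_smul] at hc
      rw [← hc]
    · rintro ⟨a, rfl⟩
      exact hmin a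
  refine ⟨?_, ?_, ?_⟩
  · rw [hMeq, ← Nat.card_coe_set_eq, Nat.card_range_of_injective hinj, Nat.card_zmod]
  · intro i hip c hc
    have hc' : c ∈ Set.range f := by rw [← hMeq]; exact hc
    obtain ⟨a, rfl⟩ := hc'
    rw [hfval a i p hip]
    have hFp : fibMod p p ≠ 0 := hnz p (by omega) (by omega) (by omega)
    rw [hF0, mul_zero, zero_add]
    exact hFp
  · intro i hi1 hip
    obtain ⟨m, him⟩ : ∃ m, (i:ℕ) = m + 1 := ⟨(i:ℕ) - 1, by omega⟩
    have hFm1 : fibMod p (m+1) ≠ 0 := by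
      have := i.isLt
      exact hnz (m+1) (by omega) (by omega) (by omega)
    set a₀ : ZMod p := -fibMod p m * (fibMod p (m+1))⁻¹ with ha₀
    have hchar : ∀ a : ZMod p, f a i = 0 ↔ a = a₀ := by
      intro a
      rw [hfval a i m him]
      constructor
      · intro h
        rw [ha₀, eq_mul_inv_iff_mul_eq₀ hFm1]
        linear_combination h
      · rintro rfl
        rw [ha₀, mul_assoc, inv_mul_cancel₀ hFm1]; ring
    have hSeq : {c | IsMinimalCodeword p (2*p+2) (fibCode p (2*p+2)) c ∧ c i ≠ 0}
        = f '' {a₀}ᶜ := by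
      ext c
      constructor
      · rintro ⟨hcm, hci⟩
        have hcm' : c ∈ Set.range f := by rw [← hMeq]; exact hcm
        obtain ⟨a, rfl⟩ := hcm'
        refine ⟨a, ?_, rfl⟩
        simp only [Set.mem_compl_iff, Set.mem_singleton_iff]
        intro h
        exact hci ((hchar a).mpr h)
      · rintro ⟨a, ha, rfl⟩
        simp only [Set.mem_compl_iff, Set.mem_singleton_iff] at ha
        exact ⟨hmin a, fun h => ha ((hchar a).mp h)⟩
    rw [hSeq, Set.ncard_image_of_injective _ hinj]
    have hcompl := Set.ncard_add_ncard_compl ({a₀} : Set (ZMod p))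
    rw [Set.ncard_singleton, Nat.card_zmod] at hcompl
    omega
end

section
/- Let p be an odd prime with Pisano period l_p = p−1 and β(p) = 1, and let C = ⟨f(x)⟩ be the cyclic code of parameters [p−1, 2, p−2] over F_p generated by the Fibonacci polynomial f(x) (coordinates indexed 0, 1, …, p−2). Then C has exactly p−2 minimal codewords, and each coordinate i with 1 ≤ i ≤ p−2 belongs to the support of exactly p−3 of the minimal codewords of C. -/
open Polynomial

/-! ### Auxiliary lemmas -/

section FibAux
variable {p l : ℕ}

lemma fib_per (hl0 : fibMod p l = 0) (hl1 : fibMod p (l + 1) = 1) :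
    ∀ n, fibMod p (n + l) = fibMod p n := by
  intro n
  induction n using Nat.twoStepInduction with
  | zero => simpa [show fibMod p 0 = 0 from rfl] using hl0
  | one => simpa [Nat.add_comm, show fibMod p 1 = 1 from rfl] using hl1
  | more n ih1 ih2 =>
    have h : n + 2 + l = (n + l) + 2 := by omega
    rw [h]
    show fibMod p (n + l + 1) + fibMod p (n + l) = _
    rw [show n + l + 1 = (n+1) + l by omega, ih1, ih2]
    rfl

lemma fib_per_k (hper : ∀ n, fibMod p (n + l) = fibMod p n) :
    ∀ k n, fibMod p (n + l * k) = fibMod p n := by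
  intro k
  induction k with
  | zero => simp
  | succ k ih => intro n; rw [Nat.mul_succ, ← Nat.add_assoc, hper, ih]

lemma fib_cong (hper : ∀ n, fibMod p (n + l) = fibMod p n) :
    ∀ a b, a % l = b % l → fibMod p a = fibMod p b := by
  have key : ∀ a, fibMod p a = fibMod p (a % l) := by
    intro a
    conv_lhs => rw [show a = a % l + l * (a / l) from (Nat.mod_add_div a l).symm]
    exact fib_per_k hper _ _
  intro a b h
  rw [key a, key b, h]

lemma fib_prop (t : ZMod p) (m n : ℕ) (h0 : fibMod p m = t * fibMod p n)
    (h1 : fibMod p (m + 1) = t * fibMod p (n + 1)) :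
    ∀ s, fibMod p (m + s) = t * fibMod p (n + s) := by
  intro s
  induction s using Nat.twoStepInduction with
  | zero => simpa using h0
  | one => simpa using h1
  | more s ih1 ih2 =>
    rw [show m + (s + 2) = (m + s) + 2 by omega, show n + (s + 2) = (n + s) + 2 by omega]
    show fibMod p (m + s + 1) + fibMod p (m + s) = t * (fibMod p (n + s + 1) + fibMod p (n + s))
    rw [show m + s + 1 = m + (s+1) by omega, show n + s + 1 = n + (s+1) by omega, ih1, ih2]
    ring

lemma fib_distinct [Fact p.Prime] (hl : 2 ≤ l)
    (hper : ∀ n, fibMod p (n + l) = fibMod p n)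
    (hFne : ∀ i, 0 < i → i < l → fibMod p i ≠ 0) :
    ∀ i j : ℕ, 0 < i → i < j → j < l →
      fibMod p (i + l - 1) * fibMod p j ≠ fibMod p (j + l - 1) * fibMod p i := by
  intro i j hi hij hjl heq
  set m := j + l - 1 with hm
  set n := i + l - 1 with hn
  have hFn1 : fibMod p (n + 1) = fibMod p i := by rw [show n + 1 = i + l by omega, hper]
  have hFm1 : fibMod p (m + 1) = fibMod p j := by rw [show m + 1 = j + l by omega, hper]
  have hFi : fibMod p i ≠ 0 := hFne i hi (lt_trans hij hjl)
  have hFn1ne : fibMod p (n + 1) ≠ 0 := by rw [hFn1]; exact hFi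
  set t : ZMod p := fibMod p (m + 1) * (fibMod p (n + 1))⁻¹ with ht
  have h1 : fibMod p (m + 1) = t * fibMod p (n + 1) := by
    rw [ht, mul_assoc, inv_mul_cancel₀ hFn1ne, mul_one]
  have heq' : fibMod p n * fibMod p (m + 1) = fibMod p m * fibMod p (n + 1) := by
    rw [hFm1, hFn1]; exact heq
  have h0 : fibMod p m = t * fibMod p n := by
    apply mul_right_cancel₀ hFn1ne
    calc fibMod p m * fibMod p (n + 1) = fibMod p n * fibMod p (m + 1) := heq'.symm
      _ = t * fibMod p n * fibMod p (n + 1) := by rw [h1]; ring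
  have hall := fib_prop t m n h0 h1 (l + 1 - i)
  rw [show n + (l + 1 - i) = l + l by omega, hper,
    show m + (l + 1 - i) = (j - i) + l + l by omega, hper, hper] at hall
  rw [show fibMod p l = 0 from by simpa [show fibMod p 0 = 0 from rfl] using hper 0, mul_zero] at hall
  exact hFne (j - i) (by omega) (by omega) hall

end FibAux

/-- The vector `(F_0, F_1, …, F_{l-1})`. -/
def uVec (p l : ℕ) : Fin l → ZMod p := fun i => fibMod p (i : ℕ)

/-- The vector `(F_{l-1}, F_0, …, F_{l-2})` (cyclic shift of `uVec`). -/
def wVec (p l : ℕ) : Fin l → ZMod p := fun i => fibMod p ((i : ℕ) + l - 1)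

/-- The candidate minimal codeword vanishing at coordinate `j`. -/
noncomputable def mcw (p l : ℕ) (j : ℕ) : Fin l → ZMod p :=
  fun i => (- fibMod p (j + l - 1) * (fibMod p j)⁻¹) * fibMod p (i : ℕ)
    + fibMod p ((i : ℕ) + l - 1)

section CodeAux
variable {p l : ℕ}

lemma polyVec_fib (hpis : pisano p = l) : polyVec p l (fibPoly p) = uVec p l := by
  funext i
  simp only [polyVec, fibPoly, hpis, uVec, Polynomial.finset_sum_coeff,
    Polynomial.coeff_C_mul, Polynomial.coeff_X_pow]
  rw [Finset.sum_eq_single (i : ℕ)]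
  · simp
  · intro b _ hb; simp [Ne.symm hb]
  · intro h; exact absurd (Finset.mem_range.2 i.isLt) h

lemma shift_u (hl : 2 ≤ l) (hper : ∀ n, fibMod p (n + l) = fibMod p n) :
    cyclicShift p l (uVec p l) = wVec p l := by
  funext i
  show fibMod p (((i : ℕ) + (l - 1)) % l) = fibMod p ((i : ℕ) + l - 1)
  refine fib_cong hper _ _ ?_
  rw [Nat.mod_mod_of_dvd _ dvd_rfl, show (i : ℕ) + (l - 1) = (i : ℕ) + l - 1 by omega]

lemma shift_w (hl : 2 ≤ l) (hper : ∀ n, fibMod p (n + l) = fibMod p n) :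
    cyclicShift p l (wVec p l) = uVec p l - wVec p l := by
  funext i
  show fibMod p ((((i : ℕ) + (l - 1)) % l) + l - 1)
      = fibMod p (i : ℕ) - fibMod p ((i : ℕ) + l - 1)
  have h1 : fibMod p ((((i : ℕ) + (l - 1)) % l) + l - 1) = fibMod p ((i : ℕ) + 2 * l - 2) := by
    refine fib_cong hper _ _ ?_
    have e0 : (((i : ℕ) + (l - 1)) % l) + l - 1 = (((i : ℕ) + (l - 1)) % l) + (l - 1) := by omega
    have e1 : (i : ℕ) + 2 * l - 2 = ((i : ℕ) + (l - 1)) + (l - 1) := by omega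
    rw [e0, e1]
    exact (Nat.ModEq.add_right (l - 1) (Nat.mod_modEq _ l))
  have h2 : fibMod p ((i : ℕ) + l - 2 + 2)
      = fibMod p ((i : ℕ) + l - 2 + 1) + fibMod p ((i : ℕ) + l - 2) := rfl
  have e1 : (i : ℕ) + l - 2 + 2 = (i : ℕ) + l := by omega
  have e2 : (i : ℕ) + l - 2 + 1 = (i : ℕ) + l - 1 := by omega
  rw [e1, e2] at h2
  have h3 : fibMod p ((i : ℕ) + 2 * l - 2) = fibMod p ((i : ℕ) + l - 2) := by
    rw [show (i : ℕ) + 2 * l - 2 = ((i : ℕ) + l - 2) + l by omega, hper]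
  rw [h1, h3, hper] at *
  rw [h2]; ring

lemma shift_linear (a b : ZMod p) (x y : Fin l → ZMod p) :
    cyclicShift p l (a • x + b • y) = a • cyclicShift p l x + b • cyclicShift p l y := rfl

lemma code_span (hl : 2 ≤ l) (hpis : pisano p = l)
    (hper : ∀ n, fibMod p (n + l) = fibMod p n) :
    fibCode p l = Submodule.span (ZMod p) {uVec p l, wVec p l} := by
  have hu := polyVec_fib (p := p) hpis
  have hsu := shift_u hl hper
  have hsw := shift_w hl hper
  apply le_antisymm
  · rw [fibCode, cyclicCode]
    apply Submodule.span_le.2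
    have key : ∀ k, (cyclicShift p l)^[k] (uVec p l)
        ∈ Submodule.span (ZMod p) {uVec p l, wVec p l} := by
      intro k
      induction k with
      | zero => exact Submodule.subset_span (Set.mem_insert _ _)
      | succ k ih =>
        rw [Function.iterate_succ_apply']
        rw [Submodule.mem_span_pair] at ih ⊢
        obtain ⟨a, b, hab⟩ := ih
        refine ⟨b, a - b, ?_⟩
        rw [← hab, shift_linear, hsu, hsw]
        module
    rintro _ ⟨k, rfl⟩
    rw [hu]
    exact key k
  · apply Submodule.span_le.2
    rintro x (rfl | rfl)
    · exact Submodule.subset_span ⟨0, by simp [hu]⟩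
    · exact Submodule.subset_span ⟨1, by simp [hu, hsu]⟩

variable [Fact p.Prime]

lemma mcw_at_zero (hl : 2 ≤ l) (hFlm1 : fibMod p (l - 1) = 1) (j : ℕ) (h0 : 0 < l) :
    mcw p l j ⟨0, h0⟩ = 1 := by
  show (- fibMod p (j + l - 1) * (fibMod p j)⁻¹) * fibMod p (0 : ℕ)
    + fibMod p ((0 : ℕ) + l - 1) = 1
  rw [show fibMod p (0 : ℕ) = 0 from rfl, show (0 : ℕ) + l - 1 = l - 1 by omega, hFlm1]
  ring

lemma mcw_zero_iff (hl : 2 ≤ l)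
    (hper : ∀ n, fibMod p (n + l) = fibMod p n)
    (hFlm1 : fibMod p (l - 1) = 1)
    (hFne : ∀ i, 0 < i → i < l → fibMod p i ≠ 0)
    (j : ℕ) (hj0 : 0 < j) (hjl : j < l) (i : Fin l) :
    mcw p l j i = 0 ↔ (i : ℕ) = j := by
  have hFj : fibMod p j ≠ 0 := hFne j hj0 hjl
  constructor
  · intro h
    by_contra hne
    simp only [mcw] at h
    rcases Nat.eq_zero_or_pos (i : ℕ) with hi0 | hipos
    · rw [hi0, show fibMod p (0 : ℕ) = 0 from rfl,
        show (0 : ℕ) + l - 1 = l - 1 by omega, hFlm1] at h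
      simp at h
    · have hcross : fibMod p (j + l - 1) * fibMod p (i : ℕ)
          = fibMod p ((i : ℕ) + l - 1) * fibMod p j := by
        linear_combination (-(fibMod p j)) * h
          - (fibMod p (j + l - 1) * fibMod p (i : ℕ)) * (inv_mul_cancel₀ hFj)
      rcases lt_or_gt_of_ne hne with hlt | hgt
      · exact fib_distinct hl hper hFne (i : ℕ) j hipos hlt hjl hcross.symm
      · exact fib_distinct hl hper hFne j (i : ℕ) hj0 hgt i.isLt hcross
  · intro h
    simp only [mcw, h]
    field_simp
    ring

lemma mcw_span (j : ℕ) :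
    mcw p l j = (- fibMod p (j + l - 1) * (fibMod p j)⁻¹) • uVec p l
      + (1 : ZMod p) • wVec p l := by
  funext i; simp [mcw, uVec, wVec]

lemma val_at_zero (hl : 2 ≤ l) (hFlm1 : fibMod p (l - 1) = 1) (a b : ZMod p) (h0 : 0 < l) :
    (a • uVec p l + b • wVec p l) ⟨0, h0⟩ = b := by
  show a * fibMod p (0 : ℕ) + b * fibMod p ((0 : ℕ) + l - 1) = b
  rw [show fibMod p (0 : ℕ) = 0 from rfl, show (0 : ℕ) + l - 1 = l - 1 by omega, hFlm1]
  ring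

lemma fib_minimal_iff (hl : 2 ≤ l) (hpis : pisano p = l)
    (hper : ∀ n, fibMod p (n + l) = fibMod p n)
    (hFlm1 : fibMod p (l - 1) = 1)
    (hFne : ∀ i, 0 < i → i < l → fibMod p i ≠ 0)
    (c : Fin l → ZMod p) :
    IsMinimalCodeword p l (fibCode p l) c ↔
      ∃ j : Fin l, 0 < (j : ℕ) ∧ c = mcw p l (j : ℕ) := by
  have hspan := code_span hl hpis hper
  have h0l : 0 < l := by omega
  constructor
  · rintro ⟨hmem, hne, hfirst, hmin⟩
    rw [hspan, Submodule.mem_span_pair] at hmem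
    obtain ⟨a, b, rfl⟩ := hmem
    have hb : b = 1 := by
      have h1 := hfirst h0l
      rw [val_at_zero hl hFlm1] at h1
      exact h1
    subst hb
    by_cases hz : ∃ j : Fin l, 0 < (j : ℕ) ∧ (a • uVec p l + (1 : ZMod p) • wVec p l) j = 0
    · obtain ⟨j, hj0, hj⟩ := hz
      have hFj : fibMod p (j : ℕ) ≠ 0 := hFne _ hj0 j.isLt
      have hj' : a * fibMod p (j : ℕ) + fibMod p ((j : ℕ) + l - 1) = 0 := by
        simpa [uVec, wVec] using hj
      have ha : a = - fibMod p ((j : ℕ) + l - 1) * (fibMod p (j : ℕ))⁻¹ := by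
        field_simp
        linear_combination hj'
      refine ⟨j, hj0, ?_⟩
      funext i
      simp [mcw, uVec, wVec, ha]
    · push_neg at hz
      have hcsupp : ∀ i : Fin l, (a • uVec p l + (1 : ZMod p) • wVec p l) i ≠ 0 := by
        intro i
        rcases Nat.eq_zero_or_pos (i : ℕ) with hi0 | hipos
        · rcases i with ⟨iv, hiv⟩
          have hiv0 : iv = 0 := hi0
          subst hiv0
          rw [val_at_zero hl hFlm1]
          exact one_ne_zero
        · exact hz i hipos
      have humem : uVec p l ∈ fibCode p l := by
        rw [hspan]; exact Submodule.subset_span (Set.mem_insert _ _)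
      obtain ⟨k, hk⟩ := hmin (uVec p l) humem (fun i _ => hcsupp i)
      have h00 := congrFun hk ⟨0, h0l⟩
      rw [Pi.smul_apply, val_at_zero hl hFlm1, smul_eq_mul, mul_one] at h00
      have hk0 : k = 0 := by rw [← h00]; rfl
      have h11 := congrFun hk ⟨1, by omega⟩
      rw [hk0, Pi.smul_apply, zero_smul] at h11
      exact (one_ne_zero (show (1 : ZMod p) = 0 from h11)).elim
  · rintro ⟨j, hj0, rfl⟩
    have hFj : fibMod p (j : ℕ) ≠ 0 := hFne _ hj0 j.isLt
    refine ⟨?_, ?_, ?_, ?_⟩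
    · rw [hspan, Submodule.mem_span_pair]
      exact ⟨_, 1, (mcw_span _).symm⟩
    · intro h
      have := congrFun h ⟨0, h0l⟩
      rw [mcw_at_zero hl hFlm1 _ h0l] at this
      simp at this
    · intro h
      exact mcw_at_zero hl hFlm1 _ h0l
    · intro v hv hsupp
      rw [hspan, Submodule.mem_span_pair] at hv
      obtain ⟨a', b', rfl⟩ := hv
      have hvj : (a' • uVec p l + b' • wVec p l) j = 0 := by
        by_contra hne
        exact hsupp j hne
          ((mcw_zero_iff hl hper hFlm1 hFne (j : ℕ) hj0 j.isLt j).2 rfl)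
      have hvj' : a' * fibMod p (j : ℕ) + b' * fibMod p ((j : ℕ) + l - 1) = 0 := by
        simpa [uVec, wVec] using hvj
      have key : a' = b' * (- fibMod p ((j : ℕ) + l - 1) * (fibMod p (j : ℕ))⁻¹) := by
        field_simp
        linear_combination hvj'
      refine ⟨b', ?_⟩
      funext i
      show a' * fibMod p (i : ℕ) + b' * fibMod p ((i : ℕ) + l - 1)
        = b' * ((- fibMod p ((j : ℕ) + l - 1) * (fibMod p (j : ℕ))⁻¹) * fibMod p (i : ℕ)
          + fibMod p ((i : ℕ) + l - 1))
      rw [key]; ring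

end CodeAux

/-- For an odd prime `p` with `l_p = p - 1` and `β(p) = 1`, the
`[p-1, 2, p-2]` cyclic code `C = ⟨f(x)⟩` has exactly `p - 2` minimal codewords, and every
coordinate `i` with `1 ≤ i ≤ p - 2` lies in the support of exactly `p - 3` of them. -/
theorem fibCode_minimal_codewords_beta_one (p : ℕ) [Fact p.Prime] (hodd : Odd p)
    (hl : pisano p = p - 1) (hb : betaP p = 1) :
    Set.ncard {c | IsMinimalCodeword p (p - 1) (fibCode p (p - 1)) c} = p - 2 ∧
      ∀ i : Fin (p - 1), 1 ≤ (i : ℕ) →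
        Set.ncard {c | IsMinimalCodeword p (p - 1) (fibCode p (p - 1)) c ∧ c i ≠ 0}
          = p - 3 := by
  have hp : p.Prime := Fact.out
  have hp3 : 3 ≤ p := by
    have h2 := hp.two_le
    have : p ≠ 2 := by
      rintro rfl
      exact (by decide : ¬ Odd 2) hodd
    omega
  have hl2 : 2 ≤ p - 1 := by omega
  have h0l : 0 < p - 1 := by omega
  have hS : {t : ℕ | 0 < t ∧ fibMod p t = 0 ∧ fibMod p (t + 1) = 1}.Nonempty := by
    by_contra h
    rw [Set.not_nonempty_iff_eq_empty] at h
    rw [pisano, h, Nat.sInf_empty] at hl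
    omega
  have hmem := Nat.sInf_mem hS
  rw [show sInf {t : ℕ | 0 < t ∧ fibMod p t = 0 ∧ fibMod p (t + 1) = 1} = pisano p from rfl,
    hl] at hmem
  obtain ⟨-, hFl0, hFl1⟩ := hmem
  have hper := fib_per (p := p) (l := p - 1) hFl0 hFl1
  have hFlm1 : fibMod p (p - 1 - 1) = 1 := by
    have h2 : fibMod p (p - 1 - 1 + 2)
        = fibMod p (p - 1 - 1 + 1) + fibMod p (p - 1 - 1) := rfl
    rw [show p - 1 - 1 + 2 = p - 1 + 1 by omega, show p - 1 - 1 + 1 = p - 1 by omega,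
      hFl0, hFl1, zero_add] at h2
    exact h2.symm
  have hFne : ∀ i, 0 < i → i < p - 1 → fibMod p i ≠ 0 := by
    intro i hi0 hil hFi
    rw [betaP, hl] at hb
    obtain ⟨a, ha⟩ := Finset.card_eq_one.1 hb
    have h0mem : 0 ∈ (Finset.range (p - 1)).filter fun n => fibMod p n = 0 :=
      Finset.mem_filter.2 ⟨Finset.mem_range.2 (by omega), rfl⟩
    have himem : i ∈ (Finset.range (p - 1)).filter fun n => fibMod p n = 0 :=
      Finset.mem_filter.2 ⟨Finset.mem_range.2 hil, hFi⟩
    rw [ha, Finset.mem_singleton] at h0mem himem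
    omega
  have hchar := fun c => fib_minimal_iff hl2 hl hper hFlm1 hFne c
  have hinj : Set.InjOn (fun j : Fin (p - 1) => mcw p (p - 1) (j : ℕ))
      {j : Fin (p - 1) | 0 < (j : ℕ)} := by
    intro j1 h1 j2 h2 heq
    by_contra hne
    have h12 : mcw p (p - 1) (j1 : ℕ) j2 = mcw p (p - 1) (j2 : ℕ) j2 := congrFun heq j2
    have hz2 : mcw p (p - 1) (j2 : ℕ) j2 = 0 :=
      (mcw_zero_iff hl2 hper hFlm1 hFne _ h2 j2.isLt j2).2 rfl
    have hval : (j2 : ℕ) = (j1 : ℕ) :=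
      (mcw_zero_iff hl2 hper hFlm1 hFne (j1 : ℕ) h1 j1.isLt j2).1 (h12.trans hz2)
    exact hne (Fin.ext hval.symm)
  have hv0 : ((⟨0, h0l⟩ : Fin (p - 1)) : ℕ) = 0 := rfl
  constructor
  · have hset : {c | IsMinimalCodeword p (p - 1) (fibCode p (p - 1)) c}
        = (fun j : Fin (p - 1) => mcw p (p - 1) (j : ℕ)) '' {j : Fin (p - 1) | 0 < (j : ℕ)} := by
      ext c
      simp only [Set.mem_setOf_eq, Set.mem_image]
      rw [hchar c]
      constructor
      · rintro ⟨j, hj0, rfl⟩; exact ⟨j, hj0, rfl⟩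
      · rintro ⟨j, hj0, rfl⟩; exact ⟨j, hj0, rfl⟩
    rw [hset, Set.ncard_image_of_injOn hinj]
    have hset2 : {j : Fin (p - 1) | 0 < (j : ℕ)}
        = ↑(Finset.univ.erase (⟨0, h0l⟩ : Fin (p - 1))) := by
      ext j
      simp only [Set.mem_setOf_eq, Finset.coe_erase, Finset.coe_univ, Set.mem_diff,
        Set.mem_univ, true_and, Set.mem_singleton_iff, Fin.ext_iff, hv0]
      omega
    rw [hset2, Set.ncard_coe_finset, Finset.card_erase_of_mem (Finset.mem_univ _),
      Finset.card_univ, Fintype.card_fin]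
    omega
  · intro i hi
    have hiz : i ≠ ⟨0, h0l⟩ := by
      intro h
      rw [Fin.ext_iff] at h
      omega
    have hset : {c | IsMinimalCodeword p (p - 1) (fibCode p (p - 1)) c ∧ c i ≠ 0}
        = (fun j : Fin (p - 1) => mcw p (p - 1) (j : ℕ)) ''
          {j : Fin (p - 1) | 0 < (j : ℕ) ∧ j ≠ i} := by
      ext c
      simp only [Set.mem_setOf_eq, Set.mem_image]
      constructor
      · rintro ⟨hmin, hci⟩
        obtain ⟨j, hj0, rfl⟩ := (hchar c).1 hmin
        refine ⟨j, ⟨hj0, ?_⟩, rfl⟩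
        intro hji
        exact hci ((mcw_zero_iff hl2 hper hFlm1 hFne (j : ℕ) hj0 j.isLt i).2
          (by rw [hji]))
      · rintro ⟨j, ⟨hj0, hji⟩, rfl⟩
        refine ⟨(hchar _).2 ⟨j, hj0, rfl⟩, ?_⟩
        intro h0
        have hval := (mcw_zero_iff hl2 hper hFlm1 hFne (j : ℕ) hj0 j.isLt i).1 h0
        exact hji (Fin.ext hval).symm
    rw [hset, Set.ncard_image_of_injOn (hinj.mono (fun j hj => hj.1))]
    have hset2 : {j : Fin (p - 1) | 0 < (j : ℕ) ∧ j ≠ i}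
        = ↑((Finset.univ.erase (⟨0, h0l⟩ : Fin (p - 1))).erase i) := by
      ext j
      simp only [Set.mem_setOf_eq, Finset.coe_erase, Finset.coe_univ, Set.mem_diff,
        Set.mem_univ, true_and, Set.mem_singleton_iff, Fin.ext_iff, hv0]
      omega
    have himem : i ∈ Finset.univ.erase (⟨0, h0l⟩ : Fin (p - 1)) :=
      Finset.mem_erase.2 ⟨hiz, Finset.mem_univ _⟩
    rw [hset2, Set.ncard_coe_finset, Finset.card_erase_of_mem himem,
      Finset.card_erase_of_mem (Finset.mem_univ _), Finset.card_univ, Fintype.card_fin]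
    omega
end
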